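/- Let P ∈ ℝ^{2n×2n} be symmetric positive definite. Then there exists a real symplectic matrix S (SJₙSᵀ = Jₙ) and positive reals ν₁,…,νₙ such that SPSᵀ = diag(ν₁I₂, ν₂I₂, …, νₙI₂) (Williamson's theorem). -/

import Mathlib

open Matrix Kronecker Polynomial

/-- The 2×2 symplectic form matrix [[0,1],[-1,0]]. -/
noncomputable def Jb : Matrix (Fin 2) (Fin 2) ℝ := !![0, 1; -1, 0]

/-- Jₙ = Iₙ ⊗ J₁, indexed by pairs (block index, position within block). -/
noncomputable def Jmat (n : ℕ) : Matrix (Fin n × Fin 2) (Fin n × Fin 2) ℝ :=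
  (1 : Matrix (Fin n) (Fin n) ℝ) ⊗ₖ Jb

/-- Block-scalar diagonal matrix diag(σ₁I₂, …, σₙI₂). -/
noncomputable def SigmaD {n : ℕ} (σ : Fin n → ℝ) : Matrix (Fin n × Fin 2) (Fin n × Fin 2) ℝ :=
  Matrix.of fun p q => if p = q then σ p.1 else 0

lemma SigmaD_eq {n : ℕ} (σ : Fin n → ℝ) : SigmaD σ = Matrix.diagonal (fun p => σ p.1) := by
  ext p q
  simp only [SigmaD, Matrix.of_apply, Matrix.diagonal]

lemma Jb_mul_Jb : Jb * Jb = -1 := by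
  ext i j
  fin_cases i <;> fin_cases j <;> simp [Jb, Matrix.mul_apply, Fin.sum_univ_two]

lemma Jb_transpose : Jbᵀ = -Jb := by
  ext i j; fin_cases i <;> fin_cases j <;> simp [Jb]

lemma Jmat_apply {n : ℕ} (p q : Fin n × Fin 2) :
    Jmat n p q = if p.1 = q.1 then Jb p.2 q.2 else 0 := by
  simp only [Jmat, Matrix.kroneckerMap_apply, Matrix.one_apply]
  split <;> simp

lemma Jmat_mul_Jmat (n : ℕ) : Jmat n * Jmat n = -1 := by
  rw [Jmat, ← Matrix.mul_kronecker_mul, Jb_mul_Jb, one_mul]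
  ext p q
  rw [Matrix.kroneckerMap_apply, Matrix.neg_apply, Matrix.one_apply]
  simp only [Matrix.neg_apply, Matrix.one_apply, Prod.ext_iff]
  by_cases h1 : p.1 = q.1 <;> by_cases h2 : p.2 = q.2 <;> simp [h1, h2]

lemma Jmat_transpose (n : ℕ) : (Jmat n)ᵀ = -(Jmat n) := by
  ext p q
  obtain ⟨p1, p2⟩ := p
  obtain ⟨q1, q2⟩ := q
  rw [Matrix.transpose_apply, Jmat_apply, Matrix.neg_apply, Jmat_apply]
  by_cases h : p1 = q1
  · subst h
    simp only [if_pos rfl]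
    fin_cases q2 <;> fin_cases p2 <;> simp [Jb]
  · have h' : ¬ q1 = p1 := fun hh => h hh.symm
    simp [h, h']

lemma isUnit_det_Jmat (n : ℕ) : IsUnit (Jmat n).det := by
  have h := Jmat_mul_Jmat n
  have h2 : (Jmat n).det * (Jmat n).det = (-1 : Matrix (Fin n × Fin 2) (Fin n × Fin 2) ℝ).det := by
    rw [← Matrix.det_mul, h]
  rw [Matrix.det_neg, Matrix.det_one, Fintype.card_prod, Fintype.card_fin, Fintype.card_fin,
    mul_one] at h2
  have : ((-1 : ℝ)) ^ (n * 2) = 1 := by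
    rw [mul_comm, pow_mul]; norm_num
  exact IsUnit.of_mul_eq_one _ (h2.trans this)

lemma SigmaD_mul_SigmaD {n : ℕ} (σ τ : Fin n → ℝ) :
    SigmaD σ * SigmaD τ = SigmaD (fun j => σ j * τ j) := by
  simp [SigmaD_eq, Matrix.diagonal_mul_diagonal]

lemma SigmaD_transpose {n : ℕ} (σ : Fin n → ℝ) : (SigmaD σ)ᵀ = SigmaD σ := by
  rw [SigmaD_eq, Matrix.diagonal_transpose]

lemma SigmaD_one {n : ℕ} : SigmaD (fun _ : Fin n => (1:ℝ)) = 1 := by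
  rw [SigmaD_eq]; exact Matrix.diagonal_one

lemma Jmat_mul_SigmaD {n : ℕ} (σ : Fin n → ℝ) :
    Jmat n * SigmaD σ = SigmaD σ * Jmat n := by
  rw [SigmaD_eq]
  ext p q
  rw [Matrix.mul_diagonal, Matrix.diagonal_mul, Jmat_apply]
  by_cases h : p.1 = q.1 <;> simp [h, mul_comm]


lemma card_le_aux {E : Type*} [Fintype E] [DecidableEq E]
    (W : Matrix E E ℂ) (hW : IsUnit W.det) (S T : Finset E)
    (h : ∀ i ∈ S, ∀ j, W i j ≠ 0 → j ∈ T) : S.card ≤ T.card := by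
  classical
  have hli : LinearIndependent ℂ (fun i : S => fun j : T => W i j) := by
    rw [Fintype.linearIndependent_iff]
    intro c hc i
    set c' : E → ℂ := fun k => if hk : k ∈ S then c ⟨k, hk⟩ else 0 with hc'
    have hvm : c' ᵥ* W = 0 := by
      funext j
      rw [Matrix.vecMul, dotProduct]
      by_cases hj : j ∈ T
      · have h0 := congrFun hc ⟨j, hj⟩
        simp only [Finset.sum_apply, Pi.smul_apply, Pi.zero_apply, smul_eq_mul] at h0
        rw [Pi.zero_apply, ← h0]
        calc ∑ k : E, c' k * W k j
            = ∑ k ∈ S, c' k * W k j :=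
              (Finset.sum_subset (Finset.subset_univ S)
                (by intro x _ hx; simp [hc', hx])).symm
          _ = ∑ i ∈ S.attach, c' ↑i * W ↑i j := (Finset.sum_attach S _).symm
          _ = ∑ i : S, c i * W ↑i j := by
              rw [Finset.univ_eq_attach]
              exact Finset.sum_congr rfl fun i _ => by simp [hc', i.2]
      · apply Finset.sum_eq_zero
        intro k _
        by_cases hk : k ∈ S
        · have : W k j = 0 := by
            by_contra hne
            exact hj (h k hk j hne)
          rw [this, mul_zero]
        · simp [hc', hk]
    have : c' = 0 := by
      have h2 := congrArg (· ᵥ* W⁻¹) hvm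
      simpa [Matrix.vecMul_vecMul, Matrix.mul_nonsing_inv W hW] using h2
    have := congrFun this i
    simpa [hc', i.2] using this
  have := hli.fintype_card_le_finrank
  simpa [Module.finrank_pi] using this

lemma sums_helper {ι : Type*} [Fintype ι] (a b : ι → ℂ) (d : ℝ)
    (h1 : ∑ l, (starRingEnd ℂ) (a l) * b l = (d : ℂ))
    (h2 : ∑ l, a l * b l = 0) :
    (∑ l, (a l).re * (b l).re = d / 2) ∧ (∑ l, (a l).im * (b l).im = d / 2) ∧
    (∑ l, (a l).re * (b l).im = 0) ∧ (∑ l, (a l).im * (b l).re = 0) := by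
  have e1r := congrArg Complex.re h1
  have e1i := congrArg Complex.im h1
  have e2r := congrArg Complex.re h2
  have e2i := congrArg Complex.im h2
  rw [Complex.re_sum] at e1r e2r
  rw [Complex.im_sum] at e1i e2i
  simp only [Complex.mul_re, Complex.mul_im, Complex.conj_re, Complex.conj_im,
    Complex.ofReal_re, Complex.ofReal_im, Complex.zero_re, Complex.zero_im,
    neg_mul, sub_neg_eq_add] at e1r e1i e2r e2i
  rw [Finset.sum_add_distrib] at e1r e2i
  simp only [← sub_eq_add_neg] at e1i
  rw [Finset.sum_sub_distrib] at e1i e2r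
  refine ⟨by linarith, by linarith, by linarith, by linarith⟩

lemma SJ_apply {n : ℕ} (μ : Fin n → ℝ) (p q : Fin n × Fin 2) :
    (SigmaD μ * Jmat n) p q = if p.1 = q.1 then μ p.1 * Jb p.2 q.2 else 0 := by
  rw [SigmaD_eq, Matrix.diagonal_mul, Jmat_apply]
  by_cases h : p.1 = q.1 <;> simp [h]

lemma skew_normal (n : ℕ) (M : Matrix (Fin n × Fin 2) (Fin n × Fin 2) ℝ)
    (hskew : Mᵀ = -M) (hdet : IsUnit M.det) :
    ∃ (Q : Matrix (Fin n × Fin 2) (Fin n × Fin 2) ℝ) (μ : Fin n → ℝ),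
      (∀ j, 0 < μ j) ∧ Qᵀ * Q = 1 ∧ Qᵀ * M * Q = SigmaD μ * Jmat n := by
  classical
  set A : Matrix (Fin n × Fin 2) (Fin n × Fin 2) ℂ := Complex.I • M.map Complex.ofReal with hA_def
  have hA : A.IsHermitian := by
    unfold Matrix.IsHermitian
    ext p q
    simp only [hA_def, Matrix.conjTranspose_apply, Matrix.smul_apply, Matrix.map_apply,
      star_mul', Complex.star_def, Complex.conj_I, Complex.conj_ofReal, smul_eq_mul]
    have : Mᵀ q p = - M q p := by rw [hskew, Matrix.neg_apply]
    rw [Matrix.transpose_apply] at this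
    rw [this]
    push_cast
    ring
  set U : Matrix (Fin n × Fin 2) (Fin n × Fin 2) ℂ := (hA.eigenvectorUnitary : Matrix (Fin n × Fin 2) (Fin n × Fin 2) ℂ) with hU_def
  set ε : (Fin n × Fin 2) → ℝ := hA.eigenvalues with hε_def
  set D : Matrix (Fin n × Fin 2) (Fin n × Fin 2) ℂ := Matrix.diagonal (fun i => (ε i : ℂ)) with hD_def
  have spec : A = U * D * star U := by
    have := hA.spectral_theorem
    rw [Unitary.conjStarAlgAut_apply] at this
    exact this
  have hUU : star U * U = 1 := Matrix.mem_unitaryGroup_iff'.mp (hA.eigenvectorUnitary).2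
  have hUU' : U * star U = 1 := Matrix.mem_unitaryGroup_iff.mp (hA.eigenvectorUnitary).2
  have hAU : A * U = U * D := by
    rw [spec, Matrix.mul_assoc, Matrix.mul_assoc, hUU, Matrix.mul_one]
  -- eigenvalues nonzero
  have hdetM : M.det ≠ 0 := by
    intro h
    rw [h] at hdet
    exact (by norm_num : ¬ IsUnit (0:ℝ)) hdet
  have hdetA : A.det ≠ 0 := by
    rw [hA_def, Matrix.det_smul]
    have : (M.map Complex.ofReal).det = Complex.ofReal M.det := by
      have := RingHom.map_det Complex.ofRealHom M
      exact this.symm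
    rw [this]
    apply mul_ne_zero
    · exact pow_ne_zero _ Complex.I_ne_zero
    · simpa using hdetM
  have hdetU : U.det ≠ 0 := by
    intro h
    have := congrArg Matrix.det hUU
    rw [Matrix.det_mul, h, mul_zero, Matrix.det_one] at this
    norm_num at this
  have hε : ∀ i, ε i ≠ 0 := by
    intro i hi
    apply hdetA
    rw [spec, Matrix.det_mul, Matrix.det_mul, hD_def, Matrix.det_diagonal]
    rw [Finset.prod_eq_zero (Finset.mem_univ i) (by rw [hi]; norm_num)]
    ring
  -- conjugation
  set cj : ℂ →+* ℂ := starRingEnd ℂ with hcj_def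
  have hAconj : A.map cj = -A := by
    ext p q
    simp only [hA_def, Matrix.map_apply, Matrix.smul_apply, Matrix.neg_apply, smul_eq_mul,
      hcj_def]
    rw [_root_.map_mul, Complex.conj_I, Complex.conj_ofReal]
    ring
  have hDconj : D.map cj = D := by
    rw [hD_def, Matrix.diagonal_map (map_zero cj)]
    congr 1
    funext i
    simp [hcj_def, Complex.conj_ofReal]
  have hstarmap : ∀ (X : Matrix (Fin n × Fin 2) (Fin n × Fin 2) ℂ), (star X).map cj = Xᵀ := by
    intro X
    ext p q
    simp [Matrix.map_apply, Matrix.conjTranspose_apply, hcj_def, Complex.conj_conj]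
  have hUbar : Uᵀ * U.map cj = 1 := by
    have h1 : (star U).map cj = Uᵀ := hstarmap U
    have h2 : ((star U) * U).map cj = (star U).map cj * U.map cj := _root_.Matrix.map_mul
    rw [hUU] at h2
    have h3 : ((1 : Matrix (Fin n × Fin 2) (Fin n × Fin 2) ℂ)).map cj = 1 := by
      ext p q
      by_cases h : p = q <;> simp [Matrix.one_apply, h, hcj_def]
    rw [h3, h1] at h2
    exact h2.symm
  -- W relation
  set W : Matrix (Fin n × Fin 2) (Fin n × Fin 2) ℂ := Uᵀ * U with hW_def
  have hWD : W * (-D) = D * W := by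
    have base : U * (-D) * star U = (U.map cj) * D * Uᵀ := by
      have l1 : A.map cj = (U.map cj) * (D.map cj) * ((star U).map cj) := by
        rw [spec]
        rw [_root_.Matrix.map_mul, _root_.Matrix.map_mul]
      rw [hAconj, hDconj, hstarmap U] at l1
      have l2 : -A = U * (-D) * star U := by
        rw [spec]
        simp [Matrix.mul_assoc, Matrix.neg_mul, Matrix.mul_neg]
      rw [← l2, l1]
    have := congrArg (fun X => Uᵀ * X * U) base
    calc W * (-D) = Uᵀ * U * (-D) * (star U * U) := by rw [hUU, Matrix.mul_one, hW_def]
      _ = Uᵀ * (U * (-D) * star U) * U := by simp only [Matrix.mul_assoc]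
      _ = Uᵀ * ((U.map cj) * D * Uᵀ) * U := by rw [base]
      _ = (Uᵀ * (U.map cj)) * D * (Uᵀ * U) := by simp only [Matrix.mul_assoc]
      _ = D * W := by rw [hUbar, Matrix.one_mul, hW_def]
  have hWε : ∀ i j, W i j ≠ 0 → ε i = - ε j := by
    intro i j hne
    have h1 : (W * (-D)) i j = (D * W) i j := by rw [hWD]
    rw [hD_def] at h1
    rw [Matrix.diagonal_neg] at h1
    rw [Matrix.mul_diagonal, Matrix.diagonal_mul] at h1
    have h2 : W i j * (-(ε j : ℂ)) = (ε i : ℂ) * W i j := by exact_mod_cast h1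
    have h3 : ((ε i : ℂ) + (ε j : ℂ)) * W i j = 0 := by linear_combination - h1
    rcases mul_eq_zero.mp h3 with h | h
    · have : (ε i : ℂ) = -(ε j : ℂ) := by linear_combination h
      exact_mod_cast this
    · exact absurd h hne
  have hdetW : IsUnit W.det := by
    rw [hW_def, Matrix.det_mul, Matrix.det_transpose]
    exact (Ne.isUnit (mul_ne_zero hdetU hdetU))
  -- counting
  set Sp : Finset (Fin n × Fin 2) := Finset.univ.filter (fun i => 0 < ε i) with hSp_def
  set Sm : Finset (Fin n × Fin 2) := Finset.univ.filter (fun i => ε i < 0) with hSm_def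
  have hSm_eq : Finset.univ.filter (fun i => ¬ (0 < ε i)) = Sm := by
    apply Finset.filter_congr
    intro i _
    simp only [not_lt, eq_iff_iff]
    constructor
    · intro h; exact lt_of_le_of_ne h (hε i)
    · intro h; exact le_of_lt h
  have hsum : Sp.card + Sm.card = 2 * n := by
    rw [← hSm_eq]
    rw [Finset.card_filter_add_card_filter_not]
    simp [Fintype.card_prod, mul_comm]
  have hle1 : Sp.card ≤ Sm.card := by
    apply card_le_aux W hdetW
    intro i hi j hne
    have h1 : ε i = -ε j := hWε i j hne
    have h2 : 0 < ε i := by simpa [hSp_def] using hi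
    simp only [hSm_def, Finset.mem_filter, Finset.mem_univ, true_and]
    linarith [h1 ▸ h2]
  have hle2 : Sm.card ≤ Sp.card := by
    apply card_le_aux W hdetW
    intro i hi j hne
    have h1 : ε i = -ε j := hWε i j hne
    have h2 : ε i < 0 := by simpa [hSm_def] using hi
    simp only [hSp_def, Finset.mem_filter, Finset.mem_univ, true_and]
    linarith [h1 ▸ h2]
  have hcardp : Sp.card = n := by omega
  set e : Fin n ≃ {x // x ∈ Sp} := (Finset.equivFinOfCardEq hcardp).symm with he_def
  set ii : Fin n → (Fin n × Fin 2) := fun j => (e j : Fin n × Fin 2) with hii_def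
  have hii_inj : Function.Injective ii := fun a b hab => e.injective (Subtype.ext hab)
  have hipos : ∀ j, 0 < ε (ii j) := by
    intro j
    have hmem := (e j).2
    simp only [hSp_def, Finset.mem_filter] at hmem
    exact hmem.2
  have hAapp : ∀ p q, A p q = Complex.I * (M p q : ℂ) := by
    intro p q
    simp [hA_def]
  have hAskew : ∀ p q, A p q = - A q p := by
    intro p q
    rw [hAapp, hAapp]
    have : Mᵀ q p = (-M) q p := by rw [hskew]
    rw [Matrix.transpose_apply, Matrix.neg_apply] at this
    rw [this]
    push_cast
    ring
  have EV : ∀ (j : Fin n) (m : Fin n × Fin 2),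
      ∑ l, A m l * U l (ii j) = (ε (ii j) : ℂ) * U m (ii j) := by
    intro j m
    have h1 : (A * U) m (ii j) = (U * D) m (ii j) := by rw [hAU]
    rw [Matrix.mul_apply, hD_def, Matrix.mul_diagonal] at h1
    rw [h1]; ring
  have Mre : ∀ (j : Fin n) (m : Fin n × Fin 2),
      ∑ l, M m l * (U l (ii j)).re = ε (ii j) * (U m (ii j)).im := by
    intro j m
    calc ∑ l, M m l * (U l (ii j)).re
        = (∑ l, A m l * U l (ii j)).im := by
          rw [Complex.im_sum]
          refine Finset.sum_congr rfl fun l _ => ?_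
          rw [hAapp]
          simp [Complex.mul_im, Complex.mul_re]
      _ = ((ε (ii j) : ℂ) * U m (ii j)).im := by rw [EV j m]
      _ = ε (ii j) * (U m (ii j)).im := by simp [Complex.mul_im]
  have Mim : ∀ (j : Fin n) (m : Fin n × Fin 2),
      ∑ l, M m l * (U l (ii j)).im = -(ε (ii j) * (U m (ii j)).re) := by
    intro j m
    calc ∑ l, M m l * (U l (ii j)).im
        = -(∑ l, A m l * U l (ii j)).re := by
          rw [Complex.re_sum, ← Finset.sum_neg_distrib]
          refine Finset.sum_congr rfl fun l _ => ?_
          rw [hAapp]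
          simp [Complex.mul_im, Complex.mul_re]
          try ring
      _ = -((ε (ii j) : ℂ) * U m (ii j)).re := by rw [EV j m]
      _ = -(ε (ii j) * (U m (ii j)).re) := by simp [Complex.mul_re]
  have hH1 : ∀ j k : Fin n, ∑ l, (starRingEnd ℂ) (U l (ii j)) * U l (ii k)
      = ((if j = k then (1:ℝ) else 0 : ℝ) : ℂ) := by
    intro j k
    have h1 : (star U * U) (ii j) (ii k) = (1 : Matrix (Fin n × Fin 2) (Fin n × Fin 2) ℂ) (ii j) (ii k) := by
      rw [hUU]
    rw [Matrix.mul_apply] at h1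
    have h2 : ∀ l, (star U) (ii j) l = (starRingEnd ℂ) (U l (ii j)) := by
      intro l
      rfl
    simp only [h2] at h1
    rw [h1, Matrix.one_apply]
    by_cases h : j = k
    · simp [h]
    · have : ii j ≠ ii k := fun hc => h (hii_inj hc)
      simp [h, this]
  have hH2 : ∀ j k : Fin n, ∑ l, U l (ii j) * U l (ii k) = 0 := by
    intro j k
    set Sc : ℂ := ∑ l, U l (ii j) * U l (ii k) with hSc_def
    have hT : (ε (ii j) : ℂ) * Sc = -((ε (ii k) : ℂ) * Sc) := by
      calc (ε (ii j) : ℂ) * Sc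
          = ∑ m, ((ε (ii j) : ℂ) * U m (ii j)) * U m (ii k) := by
            rw [hSc_def, Finset.mul_sum]
            exact Finset.sum_congr rfl fun m _ => by ring
        _ = ∑ m, (∑ l, A m l * U l (ii j)) * U m (ii k) := by
            exact Finset.sum_congr rfl fun m _ => by rw [EV j m]
        _ = ∑ m, ∑ l, A m l * U l (ii j) * U m (ii k) := by
            exact Finset.sum_congr rfl fun m _ => Finset.sum_mul _ _ _
        _ = ∑ l, ∑ m, A m l * U l (ii j) * U m (ii k) := Finset.sum_comm
        _ = ∑ l, U l (ii j) * (∑ m, A m l * U m (ii k)) := by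
            refine Finset.sum_congr rfl fun l _ => ?_
            rw [Finset.mul_sum]
            exact Finset.sum_congr rfl fun m _ => by ring
        _ = ∑ l, U l (ii j) * (-((ε (ii k) : ℂ) * U l (ii k))) := by
            refine Finset.sum_congr rfl fun l _ => ?_
            congr 1
            calc ∑ m, A m l * U m (ii k)
                = ∑ m, -(A l m * U m (ii k)) := by
                  refine Finset.sum_congr rfl fun m _ => ?_
                  rw [hAskew m l]; ring
              _ = -∑ m, A l m * U m (ii k) := by rw [Finset.sum_neg_distrib]
              _ = -((ε (ii k) : ℂ) * U l (ii k)) := by rw [EV k l]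
        _ = -((ε (ii k) : ℂ) * Sc) := by
            rw [hSc_def, Finset.mul_sum, ← Finset.sum_neg_distrib]
            exact Finset.sum_congr rfl fun l _ => by ring
    have hsum0 : ((ε (ii j) : ℂ) + (ε (ii k) : ℂ)) * Sc = 0 := by linear_combination hT
    have hne : ((ε (ii j) : ℂ) + (ε (ii k) : ℂ)) ≠ 0 := by
      have : (0:ℝ) < ε (ii j) + ε (ii k) := by
        have := hipos j; have := hipos k; linarith
      intro hc
      rw [← Complex.ofReal_add] at hc
      rw [Complex.ofReal_eq_zero] at hc
      linarith
    rcases mul_eq_zero.mp hsum0 with h | h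
    · exact absurd h hne
    · exact h
  -- Q and μ
  set μ : Fin n → ℝ := fun j => ε (ii j) with hμ_def
  set Q : Matrix (Fin n × Fin 2) (Fin n × Fin 2) ℝ := Matrix.of
    (fun k p => if p.2 = (0 : Fin 2) then Real.sqrt 2 * (U k (ii p.1)).re
      else -(Real.sqrt 2 * (U k (ii p.1)).im)) with hQ_def
  have hQ0 : ∀ l k, Q l (k, 0) = Real.sqrt 2 * (U l (ii k)).re := by
    intro l k; simp [hQ_def]
  have hQ1 : ∀ l k, Q l (k, 1) = -(Real.sqrt 2 * (U l (ii k)).im) := by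
    intro l k; simp [hQ_def]
  have hsqrt2 : Real.sqrt 2 * Real.sqrt 2 = 2 := Real.mul_self_sqrt (by norm_num)
  have hkey : ∀ j k : Fin n,
      (∑ l, (U l (ii j)).re * (U l (ii k)).re = (if j = k then (1:ℝ) else 0) / 2) ∧
      (∑ l, (U l (ii j)).im * (U l (ii k)).im = (if j = k then (1:ℝ) else 0) / 2) ∧
      (∑ l, (U l (ii j)).re * (U l (ii k)).im = 0) ∧
      (∑ l, (U l (ii j)).im * (U l (ii k)).re = 0) := by
    intro j k
    exact sums_helper (fun l => U l (ii j)) (fun l => U l (ii k)) _ (hH1 j k) (hH2 j k)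
  have hQQ : Qᵀ * Q = 1 := by
    ext p q
    obtain ⟨j, aa⟩ := p
    obtain ⟨k, bb⟩ := q
    obtain ⟨k1, k2, k3, k4⟩ := hkey j k
    rw [Matrix.mul_apply]
    simp only [Matrix.transpose_apply]
    rw [Matrix.one_apply]
    have haa : aa = 0 ∨ aa = 1 := by omega
    have hbb : bb = 0 ∨ bb = 1 := by omega
    rcases haa with rfl | rfl <;> rcases hbb with rfl | rfl
    · simp only [hQ0, Prod.mk.injEq, and_true]
      calc ∑ l, (Real.sqrt 2 * (U l (ii j)).re) * (Real.sqrt 2 * (U l (ii k)).re)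
          = ∑ l, 2 * ((U l (ii j)).re * (U l (ii k)).re) := by
            refine Finset.sum_congr rfl fun l _ => ?_
            rw [show (Real.sqrt 2 * (U l (ii j)).re) * (Real.sqrt 2 * (U l (ii k)).re)
              = (Real.sqrt 2 * Real.sqrt 2) * ((U l (ii j)).re * (U l (ii k)).re) from by ring,
              hsqrt2]
        _ = 2 * ∑ l, (U l (ii j)).re * (U l (ii k)).re := by rw [Finset.mul_sum]
        _ = (if j = k then (1:ℝ) else 0) := by rw [k1]; try ring
    · rw [if_neg (by simp : ¬ ((j, (0:Fin 2)) = (k, (1:Fin 2))))]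
      simp only [hQ0, hQ1]
      calc ∑ l, (Real.sqrt 2 * (U l (ii j)).re) * (-(Real.sqrt 2 * (U l (ii k)).im))
          = ∑ l, (-2) * ((U l (ii j)).re * (U l (ii k)).im) := by
            refine Finset.sum_congr rfl fun l _ => ?_
            rw [show (Real.sqrt 2 * (U l (ii j)).re) * (-(Real.sqrt 2 * (U l (ii k)).im))
              = (-(Real.sqrt 2 * Real.sqrt 2)) * ((U l (ii j)).re * (U l (ii k)).im) from by ring,
              hsqrt2]
        _ = (-2) * ∑ l, (U l (ii j)).re * (U l (ii k)).im := by rw [Finset.mul_sum]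
        _ = 0 := by rw [k3]; try ring
    · rw [if_neg (by simp : ¬ ((j, (1:Fin 2)) = (k, (0:Fin 2))))]
      simp only [hQ0, hQ1]
      calc ∑ l, (-(Real.sqrt 2 * (U l (ii j)).im)) * (Real.sqrt 2 * (U l (ii k)).re)
          = ∑ l, (-2) * ((U l (ii j)).im * (U l (ii k)).re) := by
            refine Finset.sum_congr rfl fun l _ => ?_
            rw [show (-(Real.sqrt 2 * (U l (ii j)).im)) * (Real.sqrt 2 * (U l (ii k)).re)
              = (-(Real.sqrt 2 * Real.sqrt 2)) * ((U l (ii j)).im * (U l (ii k)).re) from by ring,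
              hsqrt2]
        _ = (-2) * ∑ l, (U l (ii j)).im * (U l (ii k)).re := by rw [Finset.mul_sum]
        _ = 0 := by rw [k4]; try ring
    · simp only [hQ1, Prod.mk.injEq, and_true]
      calc ∑ l, (-(Real.sqrt 2 * (U l (ii j)).im)) * (-(Real.sqrt 2 * (U l (ii k)).im))
          = ∑ l, 2 * ((U l (ii j)).im * (U l (ii k)).im) := by
            refine Finset.sum_congr rfl fun l _ => ?_
            rw [show (-(Real.sqrt 2 * (U l (ii j)).im)) * (-(Real.sqrt 2 * (U l (ii k)).im))
              = (Real.sqrt 2 * Real.sqrt 2) * ((U l (ii j)).im * (U l (ii k)).im) from by ring,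
              hsqrt2]
        _ = 2 * ∑ l, (U l (ii j)).im * (U l (ii k)).im := by rw [Finset.mul_sum]
        _ = (if j = k then (1:ℝ) else 0) := by rw [k2]; try ring
  have hMQ : M * Q = Q * (SigmaD μ * Jmat n) := by
    ext l q
    obtain ⟨k, bb⟩ := q
    rw [Matrix.mul_apply, Matrix.mul_apply]
    have hRHS : ∀ bb : Fin 2, ∑ p : Fin n × Fin 2, Q l p * (SigmaD μ * Jmat n) p (k, bb)
        = Q l (k, 0) * (μ k * Jb 0 bb) + Q l (k, 1) * (μ k * Jb 1 bb) := by
      intro bb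
      rw [Fintype.sum_prod_type]
      rw [Finset.sum_comm]
      have : ∀ c : Fin 2, ∑ k' : Fin n, Q l (k', c) * (SigmaD μ * Jmat n) (k', c) (k, bb)
          = Q l (k, c) * (μ k * Jb c bb) := by
        intro c
        have : ∀ k' : Fin n, Q l (k', c) * (SigmaD μ * Jmat n) (k', c) (k, bb)
            = if k' = k then Q l (k', c) * (μ k' * Jb c bb) else 0 := by
          intro k'
          rw [SJ_apply]
          by_cases h : k' = k <;> simp [h]
        simp only [this]
        rw [Finset.sum_ite_eq' Finset.univ k (fun k' => Q l (k', c) * (μ k' * Jb c bb))]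
        simp
      rw [Fin.sum_univ_two, this 0, this 1]
    rw [hRHS bb]
    have hbb : bb = 0 ∨ bb = 1 := by omega
    rcases hbb with rfl | rfl
    · -- bb = 0
      have hJ00 : Jb 0 0 = 0 := by simp [Jb]
      have hJ10 : Jb 1 0 = -1 := by simp [Jb]
      rw [hJ00, hJ10, hQ1]
      simp only [hQ0, mul_zero, zero_add]
      calc ∑ m, M l m * Q m (k, 0)
          = Real.sqrt 2 * ∑ m, M l m * (U m (ii k)).re := by
            rw [Finset.mul_sum]
            exact Finset.sum_congr rfl fun m _ => by rw [hQ0]; ring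
        _ = Real.sqrt 2 * (ε (ii k) * (U l (ii k)).im) := by rw [Mre k l]
        _ = -(Real.sqrt 2 * (U l (ii k)).im) * (μ k * -1) := by rw [hμ_def]; ring
    · -- bb = 1
      have hJ01 : Jb 0 1 = 1 := by simp [Jb]
      have hJ11 : Jb 1 1 = 0 := by simp [Jb]
      rw [hJ01, hJ11]
      simp only [hQ0, hQ1, mul_zero, add_zero]
      calc ∑ m, M l m * Q m (k, 1)
          = -(Real.sqrt 2) * ∑ m, M l m * (U m (ii k)).im := by
            rw [Finset.mul_sum]
            exact Finset.sum_congr rfl fun m _ => by rw [hQ1]; ring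
        _ = -(Real.sqrt 2) * (-(ε (ii k) * (U l (ii k)).re)) := by rw [Mim k l]
        _ = Real.sqrt 2 * (U l (ii k)).re * (μ k * 1) := by rw [hμ_def]; ring
  refine ⟨Q, μ, hipos, hQQ, ?_⟩
  rw [Matrix.mul_assoc, hMQ, ← Matrix.mul_assoc, hQQ, Matrix.one_mul]

open scoped MatrixOrder in
lemma psd_sqrt_aux {n : ℕ} (P : Matrix (Fin n × Fin 2) (Fin n × Fin 2) ℝ) (hP : P.PosSemidef) :
    ∃ R : Matrix (Fin n × Fin 2) (Fin n × Fin 2) ℝ, R.IsHermitian ∧ R * R = P :=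
  ⟨CFC.sqrt P, (CFC.sqrt_nonneg P).posSemidef.1, CFC.sqrt_mul_sqrt_self P hP.nonneg⟩

theorem stmt19 (n : ℕ) (P : Matrix (Fin n × Fin 2) (Fin n × Fin 2) ℝ) (hP : P.PosDef) :
    ∃ (S : Matrix (Fin n × Fin 2) (Fin n × Fin 2) ℝ) (ν : Fin n → ℝ),
      (∀ j, 0 < ν j) ∧ S * Jmat n * Sᵀ = Jmat n ∧ S * P * Sᵀ = SigmaD ν := by
  classical
  have hPs : P.PosSemidef := hP.posSemidef
  obtain ⟨R, hRherm0, hRR0⟩ := psd_sqrt_aux P hPs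
  have hRherm : R.IsHermitian := hRherm0
  have hRsym : Rᵀ = R := by
    ext i j
    conv_rhs => rw [← hRherm]
    simp [Matrix.conjTranspose_apply]
  have hRR : R * R = P := hRR0
  have hdetP : P.det ≠ 0 := ne_of_gt hP.det_pos
  have hdetR : IsUnit R.det := by
    have h : R.det * R.det = P.det := by rw [← Matrix.det_mul, hRR]
    exact isUnit_of_mul_isUnit_left (h ▸ Ne.isUnit hdetP)
  set T : Matrix (Fin n × Fin 2) (Fin n × Fin 2) ℝ := R⁻¹ with hT_def
  have hTsym : Tᵀ = T := by rw [hT_def, Matrix.transpose_nonsing_inv, hRsym]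
  have hTR : T * R = 1 := Matrix.nonsing_inv_mul R hdetR
  have hRT : R * T = 1 := Matrix.mul_nonsing_inv R hdetR
  have hdetT : IsUnit T.det := by
    have h : T.det * R.det = 1 := by rw [← Matrix.det_mul, hTR, Matrix.det_one]
    exact IsUnit.of_mul_eq_one _ h
  have hTPT : T * P * T = 1 := by
    rw [← hRR]
    calc T * (R * R) * T = (T * R) * (R * T) := by simp only [Matrix.mul_assoc]
      _ = 1 := by rw [hTR, hRT, Matrix.one_mul]
  set M : Matrix (Fin n × Fin 2) (Fin n × Fin 2) ℝ := T * Jmat n * T with hM_def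
  have hMskew : Mᵀ = -M := by
    rw [hM_def, Matrix.transpose_mul, Matrix.transpose_mul, hTsym, Jmat_transpose]
    simp only [Matrix.neg_mul, Matrix.mul_neg, Matrix.mul_assoc]
  have hMdet : IsUnit M.det := by
    rw [hM_def, Matrix.det_mul, Matrix.det_mul]
    exact (hdetT.mul (isUnit_det_Jmat n)).mul hdetT
  obtain ⟨Q, μ, hμpos, hQQ, hQMQ⟩ := skew_normal n M hMskew hMdet
  set c : Fin n → ℝ := fun j => (Real.sqrt (μ j))⁻¹ with hc_def
  have hsq : ∀ j, Real.sqrt (μ j) * Real.sqrt (μ j) = μ j :=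
    fun j => Real.mul_self_sqrt (le_of_lt (hμpos j))
  have hsqne : ∀ j, Real.sqrt (μ j) ≠ 0 :=
    fun j => ne_of_gt (Real.sqrt_pos.mpr (hμpos j))
  set S : Matrix (Fin n × Fin 2) (Fin n × Fin 2) ℝ := SigmaD c * Qᵀ * T with hS_def
  have hST : Sᵀ = T * (Q * SigmaD c) := by
    rw [hS_def, Matrix.transpose_mul, Matrix.transpose_mul, hTsym, SigmaD_transpose,
      Matrix.transpose_transpose]
  refine ⟨S, fun j => (μ j)⁻¹, fun j => inv_pos.mpr (hμpos j), ?_, ?_⟩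
  · calc S * Jmat n * Sᵀ
        = SigmaD c * ((Qᵀ * (T * Jmat n * T) * Q) * SigmaD c) := by
          rw [hS_def, hST]; simp only [Matrix.mul_assoc]
      _ = SigmaD c * ((SigmaD μ * Jmat n) * SigmaD c) := by rw [← hM_def, hQMQ]
      _ = (SigmaD c * SigmaD μ) * (Jmat n * SigmaD c) := by simp only [Matrix.mul_assoc]
      _ = (SigmaD c * SigmaD μ) * (SigmaD c * Jmat n) := by rw [Jmat_mul_SigmaD]
      _ = ((SigmaD c * SigmaD μ) * SigmaD c) * Jmat n := by simp only [Matrix.mul_assoc]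
      _ = SigmaD (fun j => c j * μ j * c j) * Jmat n := by
          rw [SigmaD_mul_SigmaD, SigmaD_mul_SigmaD]
      _ = SigmaD (fun _ => (1:ℝ)) * Jmat n := by
          congr 1
          apply congrArg
          funext j
          show (Real.sqrt (μ j))⁻¹ * μ j * (Real.sqrt (μ j))⁻¹ = 1
          calc (Real.sqrt (μ j))⁻¹ * μ j * (Real.sqrt (μ j))⁻¹
              = μ j * (Real.sqrt (μ j) * Real.sqrt (μ j))⁻¹ := by rw [mul_inv]; ring
            _ = μ j * (μ j)⁻¹ := by rw [hsq j]
            _ = 1 := mul_inv_cancel₀ (ne_of_gt (hμpos j))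
      _ = Jmat n := by rw [SigmaD_one, Matrix.one_mul]
  · calc S * P * Sᵀ
        = SigmaD c * (Qᵀ * ((T * P * T) * (Q * SigmaD c))) := by
          rw [hS_def, hST]; simp only [Matrix.mul_assoc]
      _ = SigmaD c * (Qᵀ * (Q * SigmaD c)) := by rw [hTPT, Matrix.one_mul]
      _ = SigmaD c * ((Qᵀ * Q) * SigmaD c) := by simp only [Matrix.mul_assoc]
      _ = SigmaD c * SigmaD c := by rw [hQQ, Matrix.one_mul]
      _ = SigmaD (fun j => c j * c j) := SigmaD_mul_SigmaD c c
      _ = SigmaD (fun j => (μ j)⁻¹) := by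
          apply congrArg
          funext j
          show (Real.sqrt (μ j))⁻¹ * (Real.sqrt (μ j))⁻¹ = (μ j)⁻¹
          rw [← mul_inv, hsq j]
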